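/- Let V be a finite set and h ∈ ℝ^V. (a) If f : 2^V → ℝ is supermodular with f(∅) = 0, then the minimum of ⟨f^σ, h⟩ = Σ_{u∈V} f^σ(u)·h(u) over all permutations σ of V is attained by any permutation that sorts the elements v ∈ V in non-increasing order of h(v). (b) If g : 2^V → ℝ is submodular with g(∅) = 0, then the minimum of ⟨g^σ, h⟩ over all permutations σ of V is attained by any permutation that sorts the elements v ∈ V in non-decreasing order of h(v). -/

import Mathlib

open Finset

variable {V : Type*} [Fintype V] [DecidableEq V]

/-- A set function is supermodular. -/
def Supermodular (f : Finset V → ℝ) : Prop :=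
  ∀ A B : Finset V, f A + f B ≤ f (A ∩ B) + f (A ∪ B)

/-- A set function is submodular. -/
def Submodular (g : Finset V → ℝ) : Prop :=
  ∀ A B : Finset V, g (A ∩ B) + g (A ∪ B) ≤ g A + g B

/-- A set function is monotone. -/
def MonotoneFn (f : Finset V → ℝ) : Prop :=
  ∀ A B : Finset V, A ⊆ B → f A ≤ f B

/-- A set function is strictly monotone. -/
def StrictMonoFn (g : Finset V → ℝ) : Prop :=
  ∀ A B : Finset V, A ⊂ B → g A < g B

/-- A dual-modular instance `(V; f, g)`: `f` is a nonnegative monotone supermodular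
reward function, `g` is a nonnegative strictly monotone submodular cost function,
both vanishing on the empty set. -/
structure DualModular (f g : Finset V → ℝ) : Prop where
  f_nonneg : ∀ A, 0 ≤ f A
  g_nonneg : ∀ A, 0 ≤ g A
  f_empty : f ∅ = 0
  g_empty : g ∅ = 0
  f_mono : MonotoneFn f
  g_strictMono : StrictMonoFn g
  f_supermodular : Supermodular f
  g_submodular : Submodular g

/-- Density of a subset. -/
noncomputable def density (f g : Finset V → ℝ) (S : Finset V) : ℝ := f S / g S

/-- Marginal contribution `h(S|A) = h(S ∪ A) - h(A)`. -/
def marginal (h : Finset V → ℝ) (S A : Finset V) : ℝ := h (S ∪ A) - h A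

/-- Marginal density `ρ(S|A) = f(S|A)/g(S|A)`. -/
noncomputable def margDensity (f g : Finset V → ℝ) (S A : Finset V) : ℝ :=
  marginal f S A / marginal g S A

/-- `S_{<i}`: the union of earlier parts in an indexed family. -/
def below {k : ℕ} (S : Fin k → Finset V) (i : Fin k) : Finset V :=
  (Finset.univ.filter (fun j => j < i)).biUnion S

/-- The density decomposition `V = S₁ ∪ … ∪ S_k`: each `S i` is a nonempty maximal
densest subset of the remaining instance with marginal functions. -/
structure IsDensityDecomposition (f g : Finset V → ℝ) {k : ℕ} (S : Fin k → Finset V) :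
    Prop where
  nonempty : ∀ i, (S i).Nonempty
  disj : ∀ i, Disjoint (S i) (below S i)
  cover : Finset.univ.biUnion S = (Finset.univ : Finset V)
  maxDensity : ∀ i, ∀ T : Finset V, T.Nonempty → Disjoint T (below S i) →
    margDensity f g T (below S i) ≤ margDensity f g (S i) (below S i)
  maximal : ∀ i, ∀ T : Finset V, T.Nonempty → Disjoint T (below S i) →
    margDensity f g (S i) (below S i) ≤ margDensity f g T (below S i) → T ⊆ S i

/-- `ρ_i`, the density of the `i`-th component of the decomposition. -/
noncomputable def decompDensity (f g : Finset V → ℝ) {k : ℕ} (S : Fin k → Finset V)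
    (i : Fin k) : ℝ :=
  margDensity f g (S i) (below S i)

/-- Membership in the base contrapolymatroid `B≥_f`. -/
def memBf (f : Finset V → ℝ) (x : V → ℝ) : Prop :=
  (∀ v, 0 ≤ x v) ∧ (∑ v, x v = f Finset.univ) ∧ ∀ A : Finset V, f A ≤ ∑ v ∈ A, x v

/-- Membership in the base polymatroid `B≤_g`. -/
def memBg (g : Finset V → ℝ) (y : V → ℝ) : Prop :=
  (∀ v, 0 ≤ y v) ∧ (∑ v, y v = g Finset.univ) ∧ ∀ A : Finset V, ∑ v ∈ A, y v ≤ g A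

/-- An allocation is a pair `(x, y) ∈ B≥_f × B≤_g`. -/
def Allocation (f g : Finset V → ℝ) (x y : V → ℝ) : Prop := memBf f x ∧ memBg g y

/-- The locally maximin condition for an allocation. -/
def LocallyMaximin (f g : Finset V → ℝ) (x y : V → ℝ) : Prop :=
  ∀ ρ : ℝ, 0 < ρ →
    (∑ v ∈ Finset.univ.filter (fun v => ρ ≤ x v / y v), x v
       = f (Finset.univ.filter (fun v => ρ ≤ x v / y v))) ∧
    (∑ v ∈ Finset.univ.filter (fun v => ρ ≤ x v / y v), y v
       = g (Finset.univ.filter (fun v => ρ ≤ x v / y v)))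

/-- The multiset of induced densities, sorted in non-increasing order. -/
noncomputable def sortedDensities (x y : V → ℝ) : List ℝ :=
  ((Finset.univ.val.map (fun v => x v / y v)).sort (· ≤ ·)).reverse

/-- An allocation is lexicographically optimal if its non-increasingly sorted density
vector is lexicographically minimal among all allocations. -/
def LexOptimal (f g : Finset V → ℝ) (x y : V → ℝ) : Prop :=
  Allocation f g x y ∧
  ∀ x' y' : V → ℝ, Allocation f g x' y' → sortedDensities x y ≤ sortedDensities x' y'

/-- The hockey-stick divergence `HS_γ(x ‖ y)`. -/
noncomputable def HS (γ : ℝ) (x y : V → ℝ) : ℝ := ∑ u, max (x u - γ * y u) 0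

/-- The `θ`-divergence `D_θ(x ‖ y) = Σ_u y_u · θ(x_u / y_u)`. -/
noncomputable def Dtheta (θ : ℝ → ℝ) (x y : V → ℝ) : ℝ := ∑ u, y u * θ (x u / y u)

/-- Permutations of `V`, encoded as bijections to positions `Fin |V|`;
`u ≺_σ v` iff `σ u < σ v`. -/
abbrev Perms (V : Type*) [Fintype V] := V ≃ Fin (Fintype.card V)

/-- `h^σ(u)`: the marginal contribution of `u` given the elements preceding it in `σ`. -/
def permVal (h : Finset V → ℝ) (σ : Perms V) (u : V) : ℝ :=
  h (insert u (Finset.univ.filter (fun w => σ w < σ u))) -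
    h (Finset.univ.filter (fun w => σ w < σ u))

/-- A probability distribution on permutations of `V`. -/
def IsDist (p : Perms V → ℝ) : Prop := (∀ σ, 0 ≤ p σ) ∧ ∑ σ, p σ = 1

/-- `h^p(u) = Σ_σ p_σ · h^σ(u)`. -/
noncomputable def distVal (h : Finset V → ℝ) (p : Perms V → ℝ) (u : V) : ℝ :=
  ∑ σ, p σ * permVal h σ u

/-- The density induced by a solution `(p, q)`. -/
noncomputable def solDensity (f g : Finset V → ℝ) (p q : Perms V → ℝ) (v : V) : ℝ :=
  distVal f p v / distVal g q v

/-- A solution `(p, q)` is locally maximin if whenever `u` has strictly larger induced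
density than `v`, every permutation with positive weight puts `u` before `v`. -/
def LocallyMaximinSol (f g : Finset V → ℝ) (p q : Perms V → ℝ) : Prop :=
  ∀ u v : V, solDensity f g p q v < solDensity f g p q u →
    ∀ σ : Perms V, (0 < p σ ∨ 0 < q σ) → σ u < σ v

/-- The convex-program objective `Φ_θ(p, q) = D_θ(f^p ‖ g^q)`. -/
noncomputable def Phi (θ : ℝ → ℝ) (f g : Finset V → ℝ) (p q : Perms V → ℝ) : ℝ :=
  Dtheta θ (distVal f p) (distVal g q)

/-- Fact 5.1, dot-product optimization: for supermodular `f`,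
`⟨f^σ, h⟩` is minimized by any permutation sorting `V` in non-increasing order of `h`;
for submodular `g`, `⟨g^σ, h⟩` is minimized by sorting in non-decreasing order. -/

private lemma aux_prefix_eq (g : Finset V → ℝ) (hg0 : g ∅ = 0) (τ : Perms V) (m : ℕ) :
    ∑ u ∈ univ.filter (fun u => (τ u : ℕ) < m), permVal g τ u
      = g (univ.filter (fun u => (τ u : ℕ) < m)) := by
  induction m with
  | zero => simp [hg0]
  | succ m ih =>
    by_cases hm : m < Fintype.card V
    · set u0 := τ.symm ⟨m, hm⟩ with hu0
      have hτu0 : (τ u0 : ℕ) = m := by simp [hu0]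
      have hkey : univ.filter (fun u => (τ u : ℕ) < m + 1)
          = insert u0 (univ.filter (fun u => (τ u : ℕ) < m)) := by
        ext w
        simp only [Finset.mem_filter, Finset.mem_univ, true_and, Finset.mem_insert,
          Nat.lt_succ_iff_lt_or_eq]
        constructor
        · rintro (hw | hw)
          · exact Or.inr hw
          · left
            have : τ w = ⟨m, hm⟩ := Fin.ext hw
            rw [← this] at hu0
            simp [hu0]
        · rintro (rfl | hw)
          · exact Or.inr hτu0
          · exact Or.inl hw
      have hnotmem : u0 ∉ univ.filter (fun u => (τ u : ℕ) < m) := by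
        simp [hτu0]
      have hPre : univ.filter (fun w => τ w < τ u0)
          = univ.filter (fun u => (τ u : ℕ) < m) := by
        apply Finset.filter_congr
        intro w _
        simp [Fin.lt_def, hτu0]
      rw [hkey, Finset.sum_insert hnotmem, ih]
      unfold permVal
      rw [hPre, ← hkey]
      ring
    · have hall : ∀ u : V, (τ u : ℕ) < m := fun u =>
        lt_of_lt_of_le (τ u).isLt (not_lt.mp hm)
      have : (univ.filter (fun u => (τ u : ℕ) < m + 1))
          = (univ.filter (fun u => (τ u : ℕ) < m)) := by
        rw [Finset.filter_true_of_mem (fun u _ => Nat.lt_succ_of_lt (hall u)),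
          Finset.filter_true_of_mem (fun u _ => hall u)]
      rw [this, ih]

private lemma aux_sum_le (g : Finset V → ℝ) (hg : Submodular g) (hg0 : g ∅ = 0)
    (τ : Perms V) (A : Finset V) : ∑ u ∈ A, permVal g τ u ≤ g A := by
  induction A using Finset.strongInduction with
  | _ A ih =>
    rcases A.eq_empty_or_nonempty with rfl | hA
    · simp [hg0]
    · obtain ⟨u, hu, hmax⟩ := A.exists_max_image (fun v => (τ v : ℕ)) hA
      set P := univ.filter (fun w => τ w < τ u) with hP
      have hsub : A.erase u ⊆ P := by
        intro w hw
        obtain ⟨hne, hwA⟩ := Finset.mem_erase.mp hw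
        have h1 : (τ w : ℕ) ≤ (τ u : ℕ) := hmax w hwA
        have h2 : τ w ≠ τ u := fun hc => hne (τ.injective hc)
        have : (τ w : ℕ) < (τ u : ℕ) := lt_of_le_of_ne h1 (fun hc => h2 (Fin.ext hc))
        rw [hP]
        simp only [Finset.mem_filter, Finset.mem_univ, true_and, Fin.lt_def]
        exact this
      have huP : u ∉ P := by simp [hP]
      have hint : A ∩ P = A.erase u := by
        apply Finset.Subset.antisymm
        · intro w hw
          obtain ⟨hwA, hwP⟩ := Finset.mem_inter.mp hw
          exact Finset.mem_erase.mpr ⟨fun hc => huP (hc ▸ hwP), hwA⟩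
        · intro w hw
          exact Finset.mem_inter.mpr ⟨Finset.mem_of_mem_erase hw, hsub hw⟩
      have hun : A ∪ P = insert u P := by
        apply Finset.Subset.antisymm
        · intro w hw
          rcases Finset.mem_union.mp hw with hw | hw
          · by_cases hwu : w = u
            · simp [hwu]
            · exact Finset.mem_insert_of_mem (hsub (Finset.mem_erase.mpr ⟨hwu, hw⟩))
          · exact Finset.mem_insert_of_mem hw
        · intro w hw
          rcases Finset.mem_insert.mp hw with rfl | hw
          · exact Finset.mem_union_left _ hu
          · exact Finset.mem_union_right _ hw
      have hmod := hg A P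
      rw [hint, hun] at hmod
      have hpv : permVal g τ u ≤ g A - g (A.erase u) := by
        unfold permVal
        rw [← hP]
        linarith
      have hsum : ∑ w ∈ A.erase u, permVal g τ w + permVal g τ u
          = ∑ w ∈ A, permVal g τ w := Finset.sum_erase_add A _ hu
      have hih := ih (A.erase u) (Finset.erase_ssubset hu)
      linarith

private lemma aux_key (g : Finset V → ℝ) (hg : Submodular g) (hg0 : g ∅ = 0) (h : V → ℝ)
    (σ : Perms V) (hσ : ∀ u v : V, σ u < σ v → h u ≤ h v) (τ : Perms V) :
    ∑ u, permVal g σ u * h u ≤ ∑ u, permVal g τ u * h u := by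
  rcases isEmpty_or_nonempty V with hV | hV
  · simp
  have hn0 : 0 < Fintype.card V := Fintype.card_pos
  set n := Fintype.card V with hn
  set c : ℕ → ℝ := fun m => h (σ.symm ⟨min m (n - 1), by omega⟩) with hc
  have hcmono : ∀ a b : ℕ, a ≤ b → c a ≤ c b := by
    intro a b hab
    have hab' : min a (n - 1) ≤ min b (n - 1) := by omega
    rcases eq_or_lt_of_le hab' with heq | hlt
    · have hfin : (⟨min a (n - 1), by omega⟩ : Fin n) = ⟨min b (n - 1), by omega⟩ :=
        Fin.ext (by simpa using heq)
      exact le_of_eq (congrArg (fun x => h (σ.symm x)) hfin)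
    · apply hσ
      simp [Fin.lt_def, hlt]
  have hpoint : ∀ u : V, h u = c (n - 1)
      - ∑ m ∈ Finset.range (n - 1), (if (σ u : ℕ) ≤ m then c (m + 1) - c m else 0) := by
    intro u
    set a := (σ u : ℕ) with ha
    have haval : a ≤ n - 1 := by have := (σ u).isLt; omega
    have tel : ∑ m ∈ Finset.range (n - 1), (if a ≤ m then c (m + 1) - c m else 0)
        = c (n - 1) - c a := by
      have hterm : ∀ m, (if a ≤ m then c (m + 1) - c m else 0)
          = c (max (m + 1) a) - c (max m a) := by
        intro m
        by_cases hm : a ≤ m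
        · rw [if_pos hm, max_eq_left (le_trans hm (Nat.le_succ m)), max_eq_left hm]
        · rw [if_neg hm, max_eq_right (le_of_lt (not_le.mp hm)),
            max_eq_right (not_le.mp hm)]
          simp
      rw [Finset.sum_congr rfl (fun m _ => hterm m),
        Finset.sum_range_sub (fun m => c (max m a)),
        max_eq_left haval, max_eq_right (Nat.zero_le a)]
    rw [tel]
    have hca : c a = h u := by
      have h1 : (⟨min a (n - 1), by omega⟩ : Fin n) = σ u := by
        apply Fin.ext
        simp [min_eq_left haval, ha]
        omega
      simp only [hc, h1, Equiv.symm_apply_apply]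
    rw [hca]
    ring
  have abel : ∀ π : Perms V, ∑ u, permVal g π u * h u
      = c (n - 1) * g univ
        - ∑ m ∈ Finset.range (n - 1), (c (m + 1) - c m)
            * ∑ u ∈ univ.filter (fun u => (σ u : ℕ) ≤ m), permVal g π u := by
    intro π
    have htot : ∑ u, permVal g π u = g univ := by
      have hpe := aux_prefix_eq g hg0 π n
      have hset : univ.filter (fun u => (π u : ℕ) < n) = univ :=
        Finset.filter_true_of_mem (fun u _ => (π u).isLt)
      rwa [hset] at hpe
    calc ∑ u, permVal g π u * h u
        = ∑ u, (permVal g π u * c (n - 1)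
            - ∑ m ∈ Finset.range (n - 1),
                (if (σ u : ℕ) ≤ m then permVal g π u * (c (m + 1) - c m) else 0)) := by
          apply Finset.sum_congr rfl
          intro u _
          rw [hpoint u, mul_sub, Finset.mul_sum]
          congr 1
          apply Finset.sum_congr rfl
          intro m _
          rw [mul_ite, mul_zero]
      _ = (∑ u, permVal g π u) * c (n - 1)
          - ∑ u : V, ∑ m ∈ Finset.range (n - 1),
              (if (σ u : ℕ) ≤ m then permVal g π u * (c (m + 1) - c m) else 0) := by
          rw [Finset.sum_sub_distrib, ← Finset.sum_mul]
      _ = c (n - 1) * g univ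
          - ∑ m ∈ Finset.range (n - 1), (c (m + 1) - c m)
              * ∑ u ∈ univ.filter (fun u => (σ u : ℕ) ≤ m), permVal g π u := by
          rw [htot, mul_comm, Finset.sum_comm]
          congr 1
          apply Finset.sum_congr rfl
          intro m _
          rw [← Finset.sum_filter, ← Finset.sum_mul, mul_comm]
  rw [abel σ, abel τ]
  apply sub_le_sub_left
  apply Finset.sum_le_sum
  intro m _
  have hd : 0 ≤ c (m + 1) - c m := by linarith [hcmono m (m + 1) (Nat.le_succ m)]
  have hfil : univ.filter (fun u => (σ u : ℕ) ≤ m)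
      = univ.filter (fun u => (σ u : ℕ) < m + 1) := by
    apply Finset.filter_congr
    intro u _
    simp [Nat.lt_succ_iff]
  have hGσ : ∑ u ∈ univ.filter (fun u => (σ u : ℕ) ≤ m), permVal g σ u
      = g (univ.filter (fun u => (σ u : ℕ) ≤ m)) := by
    rw [hfil]; exact aux_prefix_eq g hg0 σ (m + 1)
  have hGτ : ∑ u ∈ univ.filter (fun u => (σ u : ℕ) ≤ m), permVal g τ u
      ≤ g (univ.filter (fun u => (σ u : ℕ) ≤ m)) := aux_sum_le g hg hg0 τ _
  rw [hGσ]
  exact mul_le_mul_of_nonneg_left hGτ hd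

theorem dot_product_optimization (h : V → ℝ) :
    (∀ f : Finset V → ℝ, Supermodular f → f ∅ = 0 →
      ∀ σ : Perms V, (∀ u v : V, σ u < σ v → h v ≤ h u) →
        ∀ τ : Perms V, ∑ u, permVal f σ u * h u ≤ ∑ u, permVal f τ u * h u) ∧
    (∀ g : Finset V → ℝ, Submodular g → g ∅ = 0 →
      ∀ σ : Perms V, (∀ u v : V, σ u < σ v → h u ≤ h v) →
        ∀ τ : Perms V, ∑ u, permVal g σ u * h u ≤ ∑ u, permVal g τ u * h u) := by
  constructor
  · intro f hf hf0 σ hσ τ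
    have hsub : Submodular (fun A => -(f A)) := by
      intro A B
      have := hf A B
      simp only [neg_add]
      linarith
    have hkey := aux_key (fun A => -(f A)) hsub (by simp [hf0]) (fun u => -(h u)) σ
      (fun u v huv => by simpa using hσ u v huv) τ
    have hpv : ∀ (π : Perms V) (u : V), permVal (fun A => -(f A)) π u = -(permVal f π u) := by
      intro π u
      simp [permVal]
      ring
    simp only [hpv, neg_mul_neg] at hkey
    exact hkey
  · intro g hg hg0 σ hσ τ
    exact aux_key g hg hg0 h σ hσ τ
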